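/- Let q > 1, let A be a finite nonempty set, let k ≥ 1 and let Q₁, …, Q_k : A → ℝ satisfy 1 + (q−1)·Q_j(a) > 0 for all j and all a ∈ A, and 1 + (q−1)·∑_{j=1}^{k} Q_j(a) ≥ 0 for all a ∈ A. Define a sequence of probability distributions on A by π₁(a) = 1/|A| for all a, and for j = 1, …, k, π_{j+1}(a) = π_j(a)·exp_q(Q_j(a)) / ∑_{b∈A} π_j(b)·exp_q(Q_j(b)). Then there exists a constant Z > 0 such that for every a ∈ A: Z·(π_{k+1}(a))^{q−1} = (exp_q(∑_{j=1}^{k} Q_j(a)))^{q−1} + ∑_{j=2}^{k} (q−1)^j · e_j(Q₁(a), …, Q_k(a)). -/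

import Mathlib

open Finset

/-- The q-exponential: for `q ≠ 1`, `exp_q z = (max(1 + (q-1)z, 0))^(1/(q-1))`. -/
noncomputable def qexp (q z : ℝ) : ℝ := (max (1 + (q - 1) * z) 0) ^ (1 / (q - 1))

theorem qexp_pow {q z : ℝ} (hq : q - 1 ≠ 0) (hz : 0 ≤ 1 + (q - 1) * z) :
    (qexp q z) ^ (q - 1) = 1 + (q - 1) * z := by
  unfold qexp
  rw [max_eq_left hz, ← Real.rpow_mul hz, one_div, inv_mul_cancel₀ hq, Real.rpow_one]

/-- Tsallis KL regularized policies do more than averaging: starting from the uniform policy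
`π₁(a) = 1/|A|` and iterating `π_{j+1}(a) = π_j(a)·exp_q(Q_j(a)) / ∑_b π_j(b)·exp_q(Q_j(b))`
for `j = 1, …, k`, there is a constant `Z > 0` with
`Z·(π_{k+1}(a))^{q−1} = (exp_q(∑_{j=1}^k Q_j(a)))^{q−1} + ∑_{j=2}^k (q−1)^j·e_j(Q₁(a),…,Q_k(a))`
for every `a`, where `e_j` is the j-th elementary symmetric polynomial. -/
theorem tsallisKL_policy_expansion {A : Type*} [Fintype A] [Nonempty A]
    (q : ℝ) (hq : 1 < q) (k : ℕ) (hk : 1 ≤ k)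
    (Q : ℕ → A → ℝ)
    (hQ : ∀ j, 1 ≤ j → j ≤ k → ∀ a, 0 < 1 + (q - 1) * Q j a)
    (hQsum : ∀ a, 0 ≤ 1 + (q - 1) * ∑ j ∈ Finset.Icc 1 k, Q j a)
    (p : ℕ → A → ℝ)
    (hinit : ∀ a, p 1 a = 1 / (Fintype.card A : ℝ))
    (hrec : ∀ j, 1 ≤ j → j ≤ k → ∀ a,
      p (j + 1) a = p j a * qexp q (Q j a) / ∑ b, p j b * qexp q (Q j b)) :
    ∃ Z : ℝ, 0 < Z ∧ ∀ a,
      Z * (p (k + 1) a) ^ (q - 1)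
        = (qexp q (∑ j ∈ Finset.Icc 1 k, Q j a)) ^ (q - 1)
          + ∑ j ∈ Finset.Icc 2 k, (q - 1) ^ j *
              ∑ t ∈ (Finset.Icc 1 k).powersetCard j, ∏ i ∈ t, Q i a := by
  have hq1 : (0:ℝ) < q - 1 := by linarith
  have hq0 : q - 1 ≠ 0 := ne_of_gt hq1
  have hqexp_pos : ∀ j, 1 ≤ j → j ≤ k → ∀ a, 0 < qexp q (Q j a) := by
    intro j h1 h2 a
    unfold qexp
    rw [max_eq_left (hQ j h1 h2 a).le]
    exact Real.rpow_pos_of_pos (hQ j h1 h2 a) _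
  -- the product formula for p (m+1)
  have key : ∀ m, m ≤ k → ∃ C : ℝ, 0 < C ∧
      ∀ a, p (m + 1) a = C * ∏ j ∈ Finset.Icc 1 m, qexp q (Q j a) := by
    intro m
    induction m with
    | zero =>
      intro _
      refine ⟨1 / (Fintype.card A : ℝ), by positivity, fun a => ?_⟩
      simp [hinit a]
    | succ n ih =>
      intro h
      obtain ⟨C, hC, hCa⟩ := ih (by omega)
      have hprodpos : ∀ b, 0 < ∏ j ∈ Finset.Icc 1 (n + 1), qexp q (Q j b) := by
        intro b
        exact Finset.prod_pos fun j hj => by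
          rw [Finset.mem_Icc] at hj
          exact hqexp_pos j hj.1 (le_trans hj.2 h) b
      have hS : (∑ b, p (n + 1) b * qexp q (Q (n + 1) b))
          = C * ∑ b, ∏ j ∈ Finset.Icc 1 (n + 1), qexp q (Q j b) := by
        rw [Finset.mul_sum]
        refine Finset.sum_congr rfl fun b _ => ?_
        rw [hCa b, Finset.prod_Icc_succ_top (by omega : 1 ≤ n + 1)]
        ring
      have hSpos : 0 < ∑ b, p (n + 1) b * qexp q (Q (n + 1) b) := by
        rw [hS]
        exact mul_pos hC (Finset.sum_pos (fun b _ => hprodpos b) Finset.univ_nonempty)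
      refine ⟨C / (∑ b, p (n + 1) b * qexp q (Q (n + 1) b)), div_pos hC hSpos, fun a => ?_⟩
      rw [hrec (n + 1) (by omega) h a, hCa a,
        Finset.prod_Icc_succ_top (by omega : 1 ≤ n + 1)]
      ring
  obtain ⟨C, hC, hCa⟩ := key k le_rfl
  refine ⟨(C ^ (q - 1))⁻¹, by positivity, fun a => ?_⟩
  have hP : ∀ j ∈ Finset.Icc 1 k, (0:ℝ) ≤ qexp q (Q j a) := fun j hj => by
    rw [Finset.mem_Icc] at hj; exact (hqexp_pos j hj.1 hj.2 a).le
  have hstep : (C ^ (q - 1))⁻¹ * (p (k + 1) a) ^ (q - 1)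
      = ∏ j ∈ Finset.Icc 1 k, (1 + (q - 1) * Q j a) := by
    rw [hCa a, Real.mul_rpow hC.le (Finset.prod_nonneg hP), ← mul_assoc,
      inv_mul_cancel₀ (ne_of_gt (Real.rpow_pos_of_pos hC _)), one_mul,
      ← Real.finset_prod_rpow _ _ hP]
    refine Finset.prod_congr rfl fun j hj => ?_
    rw [Finset.mem_Icc] at hj
    exact qexp_pow hq0 (hQ j hj.1 hj.2 a).le
  rw [hstep, qexp_pow hq0 (hQsum a)]
  -- expand the product
  have hexp : ∏ j ∈ Finset.Icc 1 k, (1 + (q - 1) * Q j a)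
      = ∑ j ∈ Finset.range ((Finset.Icc 1 k).card + 1),
          ∑ t ∈ (Finset.Icc 1 k).powersetCard j, (q - 1) ^ j * ∏ i ∈ t, Q i a := by
    classical
    have := Finset.prod_add (fun j => (q - 1) * Q j a) (fun _ => (1:ℝ)) (Finset.Icc 1 k)
    simp only [add_comm ((q-1) * Q _ a) 1] at this
    rw [this, Finset.powerset_card_biUnion,
      Finset.sum_biUnion (fun i _ j _ hij => Finset.pairwise_disjoint_powersetCard _ hij)]
    refine Finset.sum_congr rfl fun j _ => Finset.sum_congr rfl fun t ht => ?_
    rw [Finset.mem_powersetCard] at ht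
    simp only [Finset.prod_const_one, mul_one, Finset.prod_mul_distrib,
      Finset.prod_const, ht.2]
  rw [hexp, Nat.card_Icc]
  have hcard : k + 1 - 1 + 1 = k + 1 := by omega
  rw [hcard]
  have hsplit : Finset.range (k + 1) = Finset.Icc 0 1 ∪ Finset.Icc 2 k := by
    ext x
    simp [Finset.mem_range, Finset.mem_Icc, Finset.mem_union]
    omega
  have hdisj : Disjoint (Finset.Icc 0 1) (Finset.Icc (2:ℕ) k) := by
    rw [Finset.disjoint_left]
    intro x hx hx'
    rw [Finset.mem_Icc] at hx hx'
    omega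
  rw [hsplit, Finset.sum_union hdisj]
  have h01 : ∑ j ∈ Finset.Icc 0 1,
      ∑ t ∈ (Finset.Icc 1 k).powersetCard j, (q - 1) ^ j * ∏ i ∈ t, Q i a
      = 1 + (q - 1) * ∑ j ∈ Finset.Icc 1 k, Q j a := by
    have : Finset.Icc 0 1 = ({0, 1} : Finset ℕ) := by decide
    rw [this, Finset.sum_insert (by decide), Finset.sum_singleton]
    rw [Finset.powersetCard_zero, Finset.powersetCard_one]
    simp [Finset.mul_sum]
  rw [h01]
  congr 1
  refine Finset.sum_congr rfl fun j _ => ?_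
  rw [Finset.mul_sum]
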